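/- Let F(Θ) = ∑_{i=1}^n f_i(θ_i) where each f_i : ℝ^d → ℝ is α-strongly convex and β-smooth, and let W be a gossip matrix with largest eigenvalue λ₁(W) and smallest nonzero eigenvalue λ_{n-1}(W). Then the dual function λ ↦ F*(λ√W), restricted to the image of √W⊗I_d, is (λ_{n-1}(W)/β)-strongly convex and (λ₁(W)/α)-smooth; hence its condition number is at most κ_l/γ where κ_l = β/α and γ = λ_{n-1}(W)/λ₁(W). -/

import Mathlib

set_option maxHeartbeats 1000000

open Finset Matrix

lemma quad_bound (c r a : ℝ) (ha : 0 < a) : c * r - a / 2 * r ^ 2 ≤ c ^ 2 / (2 * a) := by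
  rw [le_div_iff₀ (by linarith : (0:ℝ) < 2 * a)]
  nlinarith [sq_nonneg (c - a * r)]

lemma aux_bddAbove {E : Type*} [NormedAddCommGroup E] [InnerProductSpace ℝ E]
    [FiniteDimensional ℝ E] {f : E → ℝ} {α : ℝ} (hα : 0 < α)
    (hf : StrongConvexOn Set.univ α f) (y : E) :
    ∃ M : ℝ, ∀ x : E, (inner ℝ y x : ℝ) - f x ≤ M := by
  set g : E → ℝ := fun x => f x - α / 2 * ‖x‖ ^ 2 with hg
  have hgconv : ConvexOn ℝ Set.univ g := strongConvexOn_iff_convex.mp hf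
  have hgcont : Continuous g := by
    rw [← continuousOn_univ]
    exact hgconv.continuousOn isOpen_univ
  obtain ⟨z, -, hz'⟩ := (isCompact_closedBall (0 : E) 1).exists_isMinOn
    ⟨0, by simp⟩ hgcont.continuousOn
  have hz : ∀ w ∈ Metric.closedBall (0:E) 1, g z ≤ g w := fun w hw => hz' hw
  set B : ℝ := |g z| + |g 0| with hB
  have hBnn : 0 ≤ B := by positivity
  have hlow : ∀ x : E, -(B * (1 + ‖x‖)) ≤ g x := by
    intro x
    rcases le_or_gt ‖x‖ 1 with h1 | h1
    · have := hz x (by simpa [Metric.mem_closedBall, dist_eq_norm] using h1)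
      have : -|g z| ≤ g x := le_trans (neg_abs_le _) this
      nlinarith [abs_nonneg (g 0), abs_nonneg (g z), norm_nonneg x]
    · have hx0 : (0:ℝ) < ‖x‖ := by linarith
      set t : ℝ := ‖x‖⁻¹ with ht
      have ht0 : 0 < t := by positivity
      have hxt : ‖x‖ * t = 1 := by rw [ht]; field_simp
      have hconv := hgconv.2 (Set.mem_univ x) (Set.mem_univ (0:E)) (le_of_lt ht0)
        (by nlinarith : (0:ℝ) ≤ 1 - t) (by ring)
      simp only [smul_zero, add_zero, smul_eq_mul] at hconv
      have hnorm : ‖t • x‖ = 1 := by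
        rw [norm_smul, Real.norm_eq_abs, abs_of_pos ht0, ht]
        field_simp
      have h2 : -|g z| ≤ g (t • x) := by
        have := hz (t • x) (by simp [Metric.mem_closedBall, dist_eq_norm, hnorm])
        exact le_trans (neg_abs_le _) this
      have h4 : -|g z| - (1 - t) * g 0 ≤ t * g x := by linarith
      have h5 : ‖x‖ * (-|g z| - (1 - t) * g 0) ≤ g x := by
        calc ‖x‖ * (-|g z| - (1 - t) * g 0) ≤ ‖x‖ * (t * g x) :=
              mul_le_mul_of_nonneg_left h4 (le_of_lt hx0)
          _ = g x := by rw [← mul_assoc, hxt, one_mul]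
      have e : ‖x‖ * (-|g z| - (1 - t) * g 0) = -(‖x‖ * |g z|) - (‖x‖ - 1) * g 0 := by
        linear_combination (g 0) * hxt
      rw [e] at h5
      nlinarith [le_abs_self (g 0), neg_abs_le (g 0), abs_nonneg (g z), abs_nonneg (g 0),
        mul_nonneg (by linarith : (0:ℝ) ≤ ‖x‖ - 1) (by linarith [neg_abs_le (g 0)] : (0:ℝ) ≤ |g 0| + g 0)]
  refine ⟨B + (‖y‖ + B) ^ 2 / (2 * α), fun x => ?_⟩
  have h1 : (inner ℝ y x : ℝ) ≤ ‖y‖ * ‖x‖ := real_inner_le_norm y x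
  have h2 : -(B * (1 + ‖x‖)) ≤ f x - α / 2 * ‖x‖ ^ 2 := hlow x
  have key : (‖y‖ + B) * ‖x‖ - α / 2 * ‖x‖ ^ 2 ≤ (‖y‖ + B) ^ 2 / (2 * α) :=
    quad_bound _ _ _ hα
  nlinarith [norm_nonneg x, norm_nonneg y]

-- per-coordinate smoothness combination
lemma smooth_comb {E : Type*} [NormedAddCommGroup E] [InnerProductSpace ℝ E]
    {f : E → ℝ} {β : ℝ}
    (hsm : ConvexOn ℝ Set.univ (fun x => β / 2 * ‖x‖ ^ 2 - f x))
    (x u : E) {a b : ℝ} (ha : 0 ≤ a) (hb : 0 ≤ b) (hab : a + b = 1) :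
    a * f (x + b • u) + b * f (x - a • u) ≤ f x + a * b * (β / 2 * ‖u‖ ^ 2) := by
  obtain rfl : b = 1 - a := by linarith
  have hcomb : a • (x + (1 - a) • u) + (1 - a) • (x - a • u) = x := by
    rw [smul_add, smul_sub, smul_smul, smul_smul]
    rw [show a * (1 - a) = (1 - a) * a by ring]
    abel_nf
    rw [← add_smul]
    norm_num
  have key := hsm.2 (Set.mem_univ (x + (1 - a) • u)) (Set.mem_univ (x - a • u)) ha hb hab
  rw [hcomb] at key
  simp only [smul_eq_mul] at key
  have e1 : ‖x + (1 - a) • u‖ ^ 2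
      = ‖x‖ ^ 2 + 2 * ((1 - a) * (inner ℝ x u : ℝ)) + (1 - a) ^ 2 * ‖u‖ ^ 2 := by
    rw [norm_add_sq_real, real_inner_smul_right, norm_smul, Real.norm_eq_abs, mul_pow, sq_abs]
  have e2 : ‖x - a • u‖ ^ 2
      = ‖x‖ ^ 2 - 2 * (a * (inner ℝ x u : ℝ)) + a ^ 2 * ‖u‖ ^ 2 := by
    rw [norm_sub_sq_real, real_inner_smul_right, norm_smul, Real.norm_eq_abs, mul_pow, sq_abs]
  rw [e1, e2] at key
  nlinarith [key]

section
variable {ι : Type*} [Fintype ι] {E : Type*} [NormedAddCommGroup E] [InnerProductSpace ℝ E]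

noncomputable def FstarGen (f : ι → E → ℝ) (Y : PiLp 2 fun _ : ι => E) : ℝ :=
  ⨆ X : PiLp 2 fun _ : ι => E, (∑ i, (inner ℝ (Y i) (X i) : ℝ)) - ∑ i, f i (X i)

variable [FiniteDimensional ℝ E]

lemma fstar_bdd {f : ι → E → ℝ} {α : ℝ} (hα : 0 < α)
    (hsc : ∀ i, StrongConvexOn Set.univ α (f i)) (Y : PiLp 2 fun _ : ι => E) :
    BddAbove (Set.range fun X : PiLp 2 fun _ : ι => E =>
      (∑ i, (inner ℝ (Y i) (X i) : ℝ)) - ∑ i, f i (X i)) := by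
  choose M hM using fun i => aux_bddAbove hα (hsc i) (Y i)
  refine ⟨∑ i, M i, ?_⟩
  rintro _ ⟨X, rfl⟩
  dsimp only
  rw [← Finset.sum_sub_distrib]
  exact Finset.sum_le_sum fun i _ => hM i (X i)

lemma le_fstar {f : ι → E → ℝ} {α : ℝ} (hα : 0 < α)
    (hsc : ∀ i, StrongConvexOn Set.univ α (f i)) (Y X : PiLp 2 fun _ : ι => E) :
    (inner ℝ Y X : ℝ) - ∑ i, f i (X i) ≤ FstarGen f Y := by
  rw [PiLp.inner_apply]
  exact le_ciSup (fstar_bdd hα hsc Y) X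

lemma fstar_sc {f : ι → E → ℝ} {α β : ℝ} (hα : 0 < α) (hβ : 0 < β)
    (hsc : ∀ i, StrongConvexOn Set.univ α (f i))
    (hsm : ∀ i, ConvexOn ℝ Set.univ (fun x => β / 2 * ‖x‖ ^ 2 - f i x))
    (Y1 Y2 : PiLp 2 fun _ : ι => E) {a b : ℝ} (ha : 0 ≤ a) (hb : 0 ≤ b) (hab : a + b = 1) :
    FstarGen f (a • Y1 + b • Y2)
      ≤ a * FstarGen f Y1 + b * FstarGen f Y2 - a * b * (‖Y1 - Y2‖ ^ 2 / (2 * β)) := by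
  rcases eq_or_lt_of_le ha with rfl | ha'
  · obtain rfl : b = 1 := by linarith
    simp
  rcases eq_or_lt_of_le hb with rfl | hb'
  · obtain rfl : a = 1 := by linarith
    simp
  apply ciSup_le
  intro X
  set u : PiLp 2 fun _ : ι => E := β⁻¹ • (Y1 - Y2) with hu
  have h1 := le_fstar hα hsc Y1 (X + b • u)
  have h2 := le_fstar hα hsc Y2 (X - a • u)
  -- rewrite inner products
  have h1' : (inner ℝ Y1 X : ℝ) + b * (inner ℝ Y1 u : ℝ) - ∑ i, f i ((X + b • u) i)
      ≤ FstarGen f Y1 := by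
    rwa [inner_add_right, real_inner_smul_right] at h1
  have h2' : (inner ℝ Y2 X : ℝ) - a * (inner ℝ Y2 u : ℝ) - ∑ i, f i ((X - a • u) i)
      ≤ FstarGen f Y2 := by
    rwa [inner_sub_right, real_inner_smul_right] at h2
  -- sum inequality from smoothness
  have hFi : ∀ i, a * f i ((X + b • u) i) + b * f i ((X - a • u) i)
      ≤ f i (X i) + a * b * (β / 2 * ‖u i‖ ^ 2) := by
    intro i
    have hx1 : (X + b • u) i = X i + b • u i := rfl
    have hx2 : (X - a • u) i = X i - a • u i := rfl
    rw [hx1, hx2]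
    exact smooth_comb (hsm i) (X i) (u i) ha hb hab
  have hsum : a * (∑ i, f i ((X + b • u) i)) + b * (∑ i, f i ((X - a • u) i))
      ≤ (∑ i, f i (X i)) + a * b * (β / 2 * ‖u‖ ^ 2) := by
    rw [PiLp.norm_sq_eq_of_L2]
    calc a * (∑ i, f i ((X + b • u) i)) + b * (∑ i, f i ((X - a • u) i))
        = ∑ i, (a * f i ((X + b • u) i) + b * f i ((X - a • u) i)) := by
          rw [Finset.mul_sum, Finset.mul_sum, ← Finset.sum_add_distrib]
      _ ≤ ∑ i, (f i (X i) + a * b * (β / 2 * ‖u i‖ ^ 2)) :=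
          Finset.sum_le_sum fun i _ => hFi i
      _ = (∑ i, f i (X i)) + a * b * (β / 2 * ∑ i, ‖u i‖ ^ 2) := by
          rw [Finset.sum_add_distrib]
          congr 1
          simp only [Finset.mul_sum]
  -- identities
  have hβ0 : β ≠ 0 := ne_of_gt hβ
  have eqw : (inner ℝ Y1 u : ℝ) - (inner ℝ Y2 u : ℝ) = β⁻¹ * ‖Y1 - Y2‖ ^ 2 := by
    rw [← inner_sub_left, hu, real_inner_smul_right, real_inner_self_eq_norm_sq]
  have equ : β / 2 * ‖u‖ ^ 2 = β⁻¹ * ‖Y1 - Y2‖ ^ 2 / 2 := by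
    rw [hu, norm_smul, Real.norm_eq_abs, mul_pow, sq_abs]
    field_simp
  have eqdiv : ‖Y1 - Y2‖ ^ 2 / (2 * β) = β⁻¹ * ‖Y1 - Y2‖ ^ 2 / 2 := by
    rw [div_eq_div_iff (by linarith : (0:ℝ) < 2 * β).ne' (by norm_num : (2:ℝ) ≠ 0)]
    field_simp
  have eqw' : a * b * (inner ℝ Y1 u : ℝ) - a * b * (inner ℝ Y2 u : ℝ)
      = a * b * (β⁻¹ * ‖Y1 - Y2‖ ^ 2) := by linear_combination (a * b) * eqw
  have equ' : a * b * (β / 2 * ‖u‖ ^ 2) = a * b * (β⁻¹ * ‖Y1 - Y2‖ ^ 2) / 2 := by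
    linear_combination (a * b) * equ
  -- goal inner rewrite
  rw [← PiLp.inner_apply, inner_add_left, real_inner_smul_left, real_inner_smul_left, eqdiv]
  have H1 := mul_le_mul_of_nonneg_left h1' ha
  have H2 := mul_le_mul_of_nonneg_left h2' hb
  nlinarith [H1, H2, hsum, eqw', equ']

lemma fstar_smooth {f : ι → E → ℝ} {α : ℝ} (hα : 0 < α)
    (hsc : ∀ i, StrongConvexOn Set.univ α (f i))
    (Y1 Y2 : PiLp 2 fun _ : ι => E) {a b : ℝ} (ha : 0 ≤ a) (hb : 0 ≤ b) (hab : a + b = 1) :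
    a * FstarGen f Y1 + b * FstarGen f Y2
      ≤ FstarGen f (a • Y1 + b • Y2) + a * b * (‖Y1 - Y2‖ ^ 2 / (2 * α)) := by
  rcases eq_or_lt_of_le ha with rfl | ha'
  · obtain rfl : b = 1 := by linarith
    simp
  rcases eq_or_lt_of_le hb with rfl | hb'
  · obtain rfl : a = 1 := by linarith
    simp
  set C : ℝ := FstarGen f (a • Y1 + b • Y2) + a * b * (‖Y1 - Y2‖ ^ 2 / (2 * α)) with hC
  have hcore : ∀ X1 X2 : PiLp 2 fun _ : ι => E,
      a * ((inner ℝ Y1 X1 : ℝ) - ∑ i, f i (X1 i))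
        + b * ((inner ℝ Y2 X2 : ℝ) - ∑ i, f i (X2 i)) ≤ C := by
    intro X1 X2
    set X : PiLp 2 fun _ : ι => E := a • X1 + b • X2 with hX
    set u : PiLp 2 fun _ : ι => E := X1 - X2 with hu
    have hFi : ∀ i, f i (X i)
        ≤ a * f i (X1 i) + b * f i (X2 i) - a * b * (α / 2 * ‖X1 i - X2 i‖ ^ 2) := by
      intro i
      have hXi : X i = a • X1 i + b • X2 i := rfl
      have := (hsc i).2 (Set.mem_univ (X1 i)) (Set.mem_univ (X2 i)) ha hb hab
      rw [hXi]
      simpa [smul_eq_mul] using this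
    have hsum : ∑ i, f i (X i)
        ≤ a * (∑ i, f i (X1 i)) + b * (∑ i, f i (X2 i)) - a * b * (α / 2 * ‖u‖ ^ 2) := by
      rw [PiLp.norm_sq_eq_of_L2]
      calc ∑ i, f i (X i)
          ≤ ∑ i, (a * f i (X1 i) + b * f i (X2 i) - a * b * (α / 2 * ‖X1 i - X2 i‖ ^ 2)) :=
            Finset.sum_le_sum fun i _ => hFi i
        _ = a * (∑ i, f i (X1 i)) + b * (∑ i, f i (X2 i))
            - a * b * (α / 2 * ∑ i, ‖u i‖ ^ 2) := by
            simp only [Finset.sum_sub_distrib, Finset.sum_add_distrib, Finset.mul_sum]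
            refine congrArg₂ _ rfl ?_
            exact Finset.sum_congr rfl fun i _ => rfl
    have eqip : (inner ℝ (a • Y1 + b • Y2) X : ℝ) + a * b * (inner ℝ (Y1 - Y2) u : ℝ)
        = a * (inner ℝ Y1 X1 : ℝ) + b * (inner ℝ Y2 X2 : ℝ) := by
      obtain rfl : b = 1 - a := by linarith
      simp only [hX, hu, inner_add_left, inner_add_right, inner_sub_left, inner_sub_right,
        real_inner_smul_left, real_inner_smul_right]
      ring
    have base : (inner ℝ (Y1 - Y2) u : ℝ) ≤ ‖Y1 - Y2‖ * ‖u‖ := real_inner_le_norm _ _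
    have quad : ‖Y1 - Y2‖ * ‖u‖ - α / 2 * ‖u‖ ^ 2 ≤ ‖Y1 - Y2‖ ^ 2 / (2 * α) :=
      quad_bound _ _ _ hα
    have habq : a * b * ((inner ℝ (Y1 - Y2) u : ℝ) - α / 2 * ‖u‖ ^ 2)
        ≤ a * b * (‖Y1 - Y2‖ ^ 2 / (2 * α)) :=
      mul_le_mul_of_nonneg_left (by linarith) (by positivity)
    have hle : (inner ℝ (a • Y1 + b • Y2) X : ℝ) - ∑ i, f i (X i)
        ≤ FstarGen f (a • Y1 + b • Y2) := le_fstar hα hsc _ X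
    rw [hC]
    nlinarith [eqip, hsum, habq, hle]
  rw [show a * FstarGen f Y1 = ⨆ X1 : PiLp 2 fun _ : ι => E,
      a * ((∑ i, (inner ℝ (Y1 i) (X1 i) : ℝ)) - ∑ i, f i (X1 i)) from
    Real.mul_iSup_of_nonneg ha _]
  rw [← le_sub_iff_add_le]
  apply ciSup_le
  intro X1
  rw [le_sub_iff_add_le]
  rw [show b * FstarGen f Y2 = ⨆ X2 : PiLp 2 fun _ : ι => E,
      b * ((∑ i, (inner ℝ (Y2 i) (X2 i) : ℝ)) - ∑ i, f i (X2 i)) from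
    Real.mul_iSup_of_nonneg hb _]
  rw [← le_sub_iff_add_le']
  apply ciSup_le
  intro X2
  rw [le_sub_iff_add_le']
  have := hcore X1 X2
  rw [PiLp.inner_apply, PiLp.inner_apply] at this
  exact this
end

lemma norm_combo {F : Type*} [NormedAddCommGroup F] [InnerProductSpace ℝ F]
    (x y : F) {a b : ℝ} (hab : a + b = 1) :
    ‖a • x + b • y‖ ^ 2 = a * ‖x‖ ^ 2 + b * ‖y‖ ^ 2 - a * b * ‖x - y‖ ^ 2 := by
  obtain rfl : b = 1 - a := by linarith
  rw [norm_add_sq_real, norm_sub_sq_real, norm_smul, norm_smul, real_inner_smul_left,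
    real_inner_smul_right, Real.norm_eq_abs, Real.norm_eq_abs, mul_pow, mul_pow, sq_abs, sq_abs]
  ring

section Bridge
variable {n d : ℕ} (sqW W : Matrix (Fin n) (Fin n) ℝ)

-- abbreviation
local notation "PiLpN" => PiLp 2 fun _ : Fin n => EuclideanSpace ℝ (Fin d)

lemma hdotW (hsqW : sqW * sqW = W) (hsqWsymm : sqW.IsSymm) (v : Fin n → ℝ) :
    (sqW *ᵥ v) ⬝ᵥ (sqW *ᵥ v) = v ⬝ᵥ (W *ᵥ v) := by
  have h1 : v ⬝ᵥ (W *ᵥ v) = (v ᵥ* sqW) ⬝ᵥ (sqW *ᵥ v) := by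
    rw [← hsqW, ← Matrix.mulVec_mulVec, Matrix.dotProduct_mulVec]
  have h2 : v ᵥ* sqW = sqW *ᵥ v := by
    rw [← Matrix.mulVec_transpose, hsqWsymm.eq]
  rw [h1, h2]

lemma sqW_one (hsqW : sqW * sqW = W) (hsqWsymm : sqW.IsSymm)
    (hW1 : W *ᵥ (fun _ => (1:ℝ)) = 0) :
    sqW *ᵥ (fun _ => (1:ℝ)) = 0 := by
  have h0 : (sqW *ᵥ fun _ => (1:ℝ)) ⬝ᵥ (sqW *ᵥ fun _ => (1:ℝ)) = 0 := by
    rw [hdotW sqW W hsqW hsqWsymm, hW1, dotProduct_zero]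
  funext j
  simp only [dotProduct] at h0
  have := (Finset.sum_eq_zero_iff_of_nonneg
    (fun i _ => mul_self_nonneg ((sqW *ᵥ fun _ => (1:ℝ)) i))).mp h0 j (Finset.mem_univ j)
  simpa using mul_self_eq_zero.mp this

lemma colsum_zero (hsqW : sqW * sqW = W) (hsqWsymm : sqW.IsSymm)
    (hW1 : W *ᵥ (fun _ => (1:ℝ)) = 0) (m : Fin n → ℝ) :
    ∑ j, (sqW *ᵥ m) j = 0 := by
  have h1 := sqW_one sqW W hsqW hsqWsymm hW1
  calc ∑ j, (sqW *ᵥ m) j = ∑ j, ∑ l, sqW j l * m l := by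
        simp [Matrix.mulVec, dotProduct]
    _ = ∑ l, (∑ j, sqW j l) * m l := by
        rw [Finset.sum_comm]
        exact Finset.sum_congr rfl fun l _ => (Finset.sum_mul _ _ _).symm
    _ = 0 := by
        refine Finset.sum_eq_zero fun l _ => ?_
        have : ∑ j, sqW l j * 1 = 0 := congrFun h1 l
        have h2 : ∑ j, sqW j l = 0 := by
          simpa [hsqWsymm.apply] using this
        rw [h2, zero_mul]

lemma norm_sq_pilp (v : PiLpN) : ‖v‖ ^ 2 = ∑ k, ∑ j, (v j k) ^ 2 := by
  rw [PiLp.norm_sq_eq_of_L2, Finset.sum_comm]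
  exact Finset.sum_congr rfl fun j _ => by
    rw [PiLp.norm_sq_eq_of_L2]
    exact Finset.sum_congr rfl fun k _ => by
      rw [Real.norm_eq_abs, sq_abs]
end Bridge

/-- Let `F(Θ) = ∑ᵢ fᵢ(θᵢ)` with each `fᵢ` `α`-strongly convex and `β`-smooth, and let `W` be a
gossip matrix with largest eigenvalue `λ₁` and smallest nonzero eigenvalue `λₙ₋₁` (expressed by
Rayleigh-quotient bounds for its PSD square root `√W`).  Then the dual function
`Λ ↦ F*(Λ√W)`, restricted to the image of `√W ⊗ I_d`, is `(λₙ₋₁/β)`-strongly convex and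
`(λ₁/α)`-smooth; hence its condition number is at most `κ_l/γ = (β/α)/(λₙ₋₁/λ₁)`. -/
theorem dual_condition_number {n d : ℕ} (hn : 0 < n)
    (f : Fin n → EuclideanSpace ℝ (Fin d) → ℝ) (α β : ℝ) (hα : 0 < α) (hβ : α ≤ β)
    (hsc : ∀ i, StrongConvexOn Set.univ α (f i))
    (hsmooth : ∀ i, ConvexOn ℝ Set.univ (fun x => β / 2 * ‖x‖ ^ 2 - f i x))
    (W sqW : Matrix (Fin n) (Fin n) ℝ) (hW : W.PosSemidef) (hsqW : sqW * sqW = W)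
    (hsqWsymm : sqW.IsSymm)
    (hkerW : ∀ v : Fin n → ℝ, W.mulVec v = 0 ↔ ∃ c : ℝ, v = fun _ => c)
    (lam1 lamn1 : ℝ) (hlam : 0 < lamn1 ∧ lamn1 ≤ lam1)
    (hspecUp : ∀ v : Fin n → ℝ, v ⬝ᵥ W.mulVec v ≤ lam1 * ∑ i, v i ^ 2)
    (hspecLow : ∀ v : Fin n → ℝ, (∑ i, v i) = 0 → lamn1 * ∑ i, v i ^ 2 ≤ v ⬝ᵥ W.mulVec v) :
    let Fstar : (PiLp 2 fun _ : Fin n => EuclideanSpace ℝ (Fin d)) → ℝ :=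
      fun Y => ⨆ X : PiLp 2 fun _ : Fin n => EuclideanSpace ℝ (Fin d),
        (∑ i, (inner ℝ (Y i) (X i) : ℝ)) - ∑ i, f i (X i)
    let mulSqW : (PiLp 2 fun _ : Fin n => EuclideanSpace ℝ (Fin d)) →
        (PiLp 2 fun _ : Fin n => EuclideanSpace ℝ (Fin d)) :=
      fun Λ => WithLp.toLp 2 (fun i => ∑ j, sqW j i • Λ j)
    let D : (PiLp 2 fun _ : Fin n => EuclideanSpace ℝ (Fin d)) → ℝ := fun Λ => Fstar (mulSqW Λ)
    StrongConvexOn (Set.range mulSqW) (lamn1 / β) D ∧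
    ConvexOn ℝ (Set.range mulSqW) (fun Λ => (lam1 / α) / 2 * ‖Λ‖ ^ 2 - D Λ) ∧
    (lam1 / α) / (lamn1 / β) = (β / α) / (lamn1 / lam1) := by
  intro Fstar mulSqW D
  have hD : ∀ Λ, D Λ = FstarGen f (mulSqW Λ) := fun _ => rfl
  have hmul : ∀ (Λ : PiLp 2 fun _ : Fin n => EuclideanSpace ℝ (Fin d)) i,
      mulSqW Λ i = ∑ j, sqW j i • Λ j := fun _ _ => rfl
  clear_value D
  clear_value Fstar
  clear_value mulSqW
  obtain ⟨hlamn1, hlam1⟩ := hlam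
  have hβ' : 0 < β := lt_of_lt_of_le hα hβ
  have hlam1' : 0 < lam1 := lt_of_lt_of_le hlamn1 hlam1
  -- linearity of mulSqW
  have hlin : ∀ (c1 c2 : ℝ) (Λ1 Λ2 : PiLp 2 fun _ : Fin n => EuclideanSpace ℝ (Fin d)),
      mulSqW (c1 • Λ1 + c2 • Λ2) = c1 • mulSqW Λ1 + c2 • mulSqW Λ2 := by
    intro c1 c2 Λ1 Λ2
    refine PiLp.ext fun i => ?_
    rw [PiLp.add_apply, PiLp.smul_apply, PiLp.smul_apply, hmul, hmul, hmul,
      Finset.smul_sum, Finset.smul_sum, ← Finset.sum_add_distrib]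
    refine Finset.sum_congr rfl fun j _ => ?_
    rw [PiLp.add_apply, PiLp.smul_apply, PiLp.smul_apply]
    rw [smul_add, smul_comm (sqW j i) c1, smul_comm (sqW j i) c2]
  have hsub : ∀ (Λ1 Λ2 : PiLp 2 fun _ : Fin n => EuclideanSpace ℝ (Fin d)),
      mulSqW (Λ1 - Λ2) = mulSqW Λ1 - mulSqW Λ2 := by
    intro Λ1 Λ2
    have := hlin 1 (-1) Λ1 Λ2
    simpa [sub_eq_add_neg, neg_smul] using this
  -- columns
  have hW1 : W *ᵥ (fun _ => (1:ℝ)) = 0 := (hkerW _).mpr ⟨1, rfl⟩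
  have hcol : ∀ (M : PiLp 2 fun _ : Fin n => EuclideanSpace ℝ (Fin d)) (k : Fin d),
      (fun j => (mulSqW M) j k) = sqW *ᵥ (fun l => M l k) := by
    intro M k
    funext j
    rw [hmul]
    show (∑ l, sqW l j • M l) k = ∑ l, sqW j l * M l k
    rw [WithLp.ofLp_sum, Finset.sum_apply]
    exact Finset.sum_congr rfl fun l _ => by rw [hsqWsymm.apply j l]; rfl
  have hker : ∀ (M : PiLp 2 fun _ : Fin n => EuclideanSpace ℝ (Fin d)) (k : Fin d),
      ∑ j, (mulSqW M) j k = 0 := by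
    intro M k
    calc ∑ j, (mulSqW M) j k = ∑ j, (sqW *ᵥ fun l => M l k) j :=
          Finset.sum_congr rfl fun j _ => congrFun (hcol M k) j
      _ = 0 := colsum_zero sqW W hsqW hsqWsymm hW1 _
  -- spectral bounds on mulSqW
  have hcolnorm : ∀ (v : PiLp 2 fun _ : Fin n => EuclideanSpace ℝ (Fin d)) (k : Fin d),
      ∑ j, ((mulSqW v) j k) ^ 2 = (fun l => v l k) ⬝ᵥ (W *ᵥ fun l => v l k) := by
    intro v k
    rw [← hdotW sqW W hsqW hsqWsymm]
    simp only [dotProduct]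
    exact Finset.sum_congr rfl fun j _ => by
      rw [show (mulSqW v) j k = (sqW *ᵥ fun l => v l k) j from congrFun (hcol v k) j, sq]
  have hup : ∀ v : PiLp 2 fun _ : Fin n => EuclideanSpace ℝ (Fin d),
      ‖mulSqW v‖ ^ 2 ≤ lam1 * ‖v‖ ^ 2 := by
    intro v
    rw [norm_sq_pilp (mulSqW v), norm_sq_pilp v, Finset.mul_sum]
    refine Finset.sum_le_sum fun k _ => ?_
    rw [hcolnorm v k]
    exact hspecUp _
  have hlowv : ∀ v : PiLp 2 fun _ : Fin n => EuclideanSpace ℝ (Fin d),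
      (∀ k, ∑ j, v j k = 0) → lamn1 * ‖v‖ ^ 2 ≤ ‖mulSqW v‖ ^ 2 := by
    intro v hv
    rw [norm_sq_pilp (mulSqW v), norm_sq_pilp v, Finset.mul_sum]
    refine Finset.sum_le_sum fun k _ => ?_
    rw [hcolnorm v k]
    exact hspecLow _ (hv k)
  have hconvr : Convex ℝ (Set.range mulSqW) := by
    rintro x ⟨M1, rfl⟩ y ⟨M2, rfl⟩ a b ha hb hab
    exact ⟨a • M1 + b • M2, hlin a b M1 M2⟩
  refine ⟨⟨hconvr, ?_⟩, ⟨hconvr, ?_⟩, ?_⟩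
  · -- strong convexity
    intro x hx y hy a b ha hb hab
    obtain ⟨M1, rfl⟩ := hx
    obtain ⟨M2, rfl⟩ := hy
    have key := fstar_sc hα hβ' hsc hsmooth (mulSqW (mulSqW M1)) (mulSqW (mulSqW M2)) ha hb hab
    have hv : mulSqW (mulSqW M1) - mulSqW (mulSqW M2) = mulSqW (mulSqW M1 - mulSqW M2) :=
      (hsub _ _).symm
    have hv2 : mulSqW M1 - mulSqW M2 = mulSqW (M1 - M2) := (hsub _ _).symm
    have hnorm : lamn1 * ‖mulSqW M1 - mulSqW M2‖ ^ 2
        ≤ ‖mulSqW (mulSqW M1) - mulSqW (mulSqW M2)‖ ^ 2 := by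
      rw [hv]
      refine hlowv _ fun k => ?_
      conv_lhs => rw [hv2]
      exact hker _ k
    have e2 : (lamn1 / β) / 2 * ‖mulSqW M1 - mulSqW M2‖ ^ 2
        = (lamn1 * ‖mulSqW M1 - mulSqW M2‖ ^ 2) / (2 * β) := by
      rw [div_div, div_mul_eq_mul_div, mul_comm β 2]
    have e4 : a * b * ((lamn1 / β) / 2 * ‖mulSqW M1 - mulSqW M2‖ ^ 2)
        ≤ a * b * (‖mulSqW (mulSqW M1) - mulSqW (mulSqW M2)‖ ^ 2 / (2 * β)) := by
      refine mul_le_mul_of_nonneg_left ?_ (by positivity)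
      rw [e2]
      exact (div_le_div_iff_of_pos_right (by linarith : (0:ℝ) < 2 * β)).mpr hnorm
    have hgoal : D (a • mulSqW M1 + b • mulSqW M2)
        ≤ a * D (mulSqW M1) + b * D (mulSqW M2)
          - a * b * ((lamn1 / β) / 2 * ‖mulSqW M1 - mulSqW M2‖ ^ 2) := by
      rw [hD, hD, hD, hlin]
      linarith [key, e4]
    simpa [smul_eq_mul] using hgoal
  · -- smoothness
    intro x hx y hy a b ha hb hab
    obtain ⟨M1, rfl⟩ := hx
    obtain ⟨M2, rfl⟩ := hy
    have key := fstar_smooth hα hsc (mulSqW (mulSqW M1)) (mulSqW (mulSqW M2)) ha hb hab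
    have hnormc := norm_combo (mulSqW M1) (mulSqW M2) hab
    have hupp : ‖mulSqW (mulSqW M1) - mulSqW (mulSqW M2)‖ ^ 2
        ≤ lam1 * ‖mulSqW M1 - mulSqW M2‖ ^ 2 := by
      rw [← hsub]
      exact hup _
    have e2 : (lam1 / α) / 2 * ‖mulSqW M1 - mulSqW M2‖ ^ 2
        = (lam1 * ‖mulSqW M1 - mulSqW M2‖ ^ 2) / (2 * α) := by
      rw [div_div, div_mul_eq_mul_div, mul_comm α 2]
    have e4 : a * b * (‖mulSqW (mulSqW M1) - mulSqW (mulSqW M2)‖ ^ 2 / (2 * α))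
        ≤ a * b * ((lam1 / α) / 2 * ‖mulSqW M1 - mulSqW M2‖ ^ 2) := by
      refine mul_le_mul_of_nonneg_left ?_ (by positivity)
      rw [e2]
      exact (div_le_div_iff_of_pos_right (by linarith : (0:ℝ) < 2 * α)).mpr hupp
    have hgoal : (lam1 / α) / 2 * ‖a • mulSqW M1 + b • mulSqW M2‖ ^ 2
          - D (a • mulSqW M1 + b • mulSqW M2)
        ≤ a * ((lam1 / α) / 2 * ‖mulSqW M1‖ ^ 2 - D (mulSqW M1))
          + b * ((lam1 / α) / 2 * ‖mulSqW M2‖ ^ 2 - D (mulSqW M2)) := by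
      rw [hD, hD, hD, hlin, hnormc]
      nlinarith [key, e4]
    simpa [smul_eq_mul] using hgoal
  · field_simp
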